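/- Let x̃ᵢ = min{xᵢ, x*} for some x* ≥ 0 and set E^d = Σᵢ p̄ᵢ·min{xᵢ, x*}. Then for every convex function E : [0,∞) → [0,∞), the following are equivalent: (i) E(p) ≤ Ω_{p̄,x}(p) for all p ≥ 0 and E(0) ≤ E^d; (ii) E(p) ≤ Ω_{p̄,x̃}(p) for all p ≥ 0. -/

import Mathlib

open MeasureTheory Set Finset

/-- The E-p transform of a signal `P`: the energy required above power rating `p`. -/
noncomputable def EpTransform (P : ℝ → ℝ) (p : ℝ) : ℝ :=
  ∫ t in Set.Ioi (0:ℝ), max (P t - p) 0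

/-- The worst-case reference signal `R_{p̄,x}(t) = Σᵢ p̄ᵢ·𝟙[0 ≤ t < xᵢ]`. -/
noncomputable def worstCase {n : ℕ} (pbar x : Fin n → ℝ) (t : ℝ) : ℝ :=
  ∑ i, if 0 ≤ t ∧ t < x i then pbar i else 0

/-- The discharging capacity curve `Ω_{p̄,x}`. -/
noncomputable def capacity {n : ℕ} (pbar x : Fin n → ℝ) (p : ℝ) : ℝ :=
  EpTransform (worstCase pbar x) p

lemma worstCase_apply {n : ℕ} (pbar x : Fin n → ℝ) :
    worstCase pbar x = fun t => ∑ i, (Set.Ico (0:ℝ) (x i)).indicator (fun _ => pbar i) t := by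
  funext t
  unfold worstCase
  refine Finset.sum_congr rfl fun i _ => ?_
  simp [Set.indicator_apply, Set.mem_Ico]

lemma worstCase_meas {n : ℕ} (pbar x : Fin n → ℝ) : Measurable (worstCase pbar x) := by
  rw [worstCase_apply]
  exact Finset.measurable_sum _ fun i _ => measurable_const.indicator measurableSet_Ico

lemma worstCase_integrable {n : ℕ} (pbar x : Fin n → ℝ) : Integrable (worstCase pbar x) := by
  rw [worstCase_apply]
  refine integrable_finset_sum _ fun i _ => ?_
  rw [integrable_indicator_iff measurableSet_Ico]
  exact integrableOn_const (by simp [Real.volume_Ico, ENNReal.ofReal_lt_top])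

lemma worstCase_nonneg {n : ℕ} (pbar x : Fin n → ℝ) (hp : ∀ i, 0 ≤ pbar i) (t : ℝ) :
    0 ≤ worstCase pbar x t := by
  refine Finset.sum_nonneg fun i _ => ?_
  split_ifs with h; exacts [hp i, le_refl 0]

lemma maxfun_integrable {n : ℕ} (pbar x : Fin n → ℝ) (hp : ∀ i, 0 ≤ pbar i) {p : ℝ} (hpge : 0 ≤ p) :
    Integrable (fun t => max (worstCase pbar x t - p) 0) := by
  refine Integrable.mono (worstCase_integrable pbar x)
    (((worstCase_meas pbar x).sub measurable_const).max measurable_const).aestronglyMeasurable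
    (ae_of_all _ fun t => ?_)
  rw [Real.norm_eq_abs, Real.norm_eq_abs, abs_of_nonneg (le_max_right _ _),
    abs_of_nonneg (worstCase_nonneg pbar x hp t)]
  exact max_le (by linarith) (worstCase_nonneg pbar x hp t)

lemma capacity_mono {n : ℕ} (pbar x : Fin n → ℝ) (hp : ∀ i, 0 ≤ pbar i) (xs : ℝ)
    {p : ℝ} (hpge : 0 ≤ p) :
    capacity pbar (fun i => min (x i) xs) p ≤ capacity pbar x p := by
  refine setIntegral_mono ((maxfun_integrable pbar _ hp hpge).integrableOn)
    ((maxfun_integrable pbar x hp hpge).integrableOn) (fun t => ?_)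
  refine max_le_max (sub_le_sub_right ?_ p) le_rfl
  refine Finset.sum_le_sum fun i _ => ?_
  split_ifs with h1 h2
  · exact le_rfl
  · exact absurd ⟨h1.1, lt_of_lt_of_le h1.2 (min_le_left _ _)⟩ h2
  · exact hp i
  · exact le_rfl


lemma ind_integrable (c a : ℝ) :
    Integrable ((Set.Ico (0:ℝ) a).indicator (fun _ => c)) := by
  rw [integrable_indicator_iff measurableSet_Ico]
  exact integrableOn_const (by simp [Real.volume_Ico, ENNReal.ofReal_lt_top])

lemma integral_worstCase_Ioo {n : ℕ} (pbar x : Fin n → ℝ) (hx : ∀ i, 0 ≤ x i)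
    {b : ℝ} (hb : ∀ i, x i ≤ b) :
    ∫ t in Set.Ioo (0:ℝ) b, worstCase pbar x t = ∑ i, pbar i * x i := by
  rw [worstCase_apply,
    integral_finset_sum _ (fun i _ => (ind_integrable (pbar i) (x i)).integrableOn)]
  refine Finset.sum_congr rfl fun i _ => ?_
  rw [setIntegral_indicator measurableSet_Ico]
  have hset : Set.Ioo (0:ℝ) b ∩ Set.Ico 0 (x i) = Set.Ioo 0 (x i) := by
    ext t
    simp only [Set.mem_inter_iff, Set.mem_Ioo, Set.mem_Ico]
    constructor
    · rintro ⟨⟨h1, _⟩, _, h4⟩; exact ⟨h1, h4⟩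
    · rintro ⟨h1, h2⟩; exact ⟨⟨h1, lt_of_lt_of_le h2 (hb i)⟩, le_of_lt h1, h2⟩
  rw [hset, setIntegral_const, measureReal_def, Real.volume_Ioo, smul_eq_mul,
    ENNReal.toReal_ofReal (by linarith [hx i]), sub_zero, mul_comm]

lemma integral_worstCase_Ioi {n : ℕ} (pbar x : Fin n → ℝ) (hx : ∀ i, 0 ≤ x i) :
    ∫ t in Set.Ioi (0:ℝ), worstCase pbar x t = ∑ i, pbar i * x i := by
  rw [worstCase_apply,
    integral_finset_sum _ (fun i _ => (ind_integrable (pbar i) (x i)).integrableOn)]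
  refine Finset.sum_congr rfl fun i _ => ?_
  rw [setIntegral_indicator measurableSet_Ico]
  have hset : Set.Ioi (0:ℝ) ∩ Set.Ico 0 (x i) = Set.Ioo 0 (x i) := by
    ext t
    simp only [Set.mem_inter_iff, Set.mem_Ioi, Set.mem_Ico, Set.mem_Ioo]
    constructor
    · rintro ⟨h1, _, h3⟩; exact ⟨h1, h3⟩
    · rintro ⟨h1, h2⟩; exact ⟨h1, le_of_lt h1, h2⟩
  rw [hset, setIntegral_const, measureReal_def, Real.volume_Ioo, smul_eq_mul,
    ENNReal.toReal_ofReal (by linarith [hx i]), sub_zero, mul_comm]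

lemma capacity_zero {n : ℕ} (pbar x : Fin n → ℝ) (hp : ∀ i, 0 ≤ pbar i) (hx : ∀ i, 0 ≤ x i) :
    capacity pbar x 0 = ∑ i, pbar i * x i := by
  unfold capacity EpTransform
  rw [← integral_worstCase_Ioi pbar x hx]
  refine setIntegral_congr_fun measurableSet_Ioi fun t _ => ?_
  rw [sub_zero, max_eq_left (worstCase_nonneg pbar x hp t)]

lemma integral_congr_offpair (f g : ℝ → ℝ) (a b : ℝ) (h : ∀ t, t ≠ a → t ≠ b → f t = g t) :
    ∫ t in Set.Ioi (0:ℝ), f t = ∫ t in Set.Ioi (0:ℝ), g t := by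
  refine integral_congr_ae (ae_restrict_of_ae ?_)
  have hsub : {t | ¬ f t = g t} ⊆ {a, b} := by
    intro t ht
    by_contra hc
    simp only [Set.mem_insert_iff, Set.mem_singleton_iff] at hc
    push_neg at hc
    exact ht (h t hc.1 hc.2)
  exact (MeasureTheory.ae_iff).2 (measure_mono_null hsub
    (((Set.finite_singleton b).insert a).measure_zero volume))

lemma capacity_eq_of_ge {n : ℕ} (pbar x : Fin n → ℝ) (hp : ∀ i, 0 ≤ pbar i) (xs : ℝ)
    {p : ℝ} (hpge : 0 ≤ p) (hpc : (∑ i, if xs < x i then pbar i else 0) ≤ p) :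
    capacity pbar x p = capacity pbar (fun i => min (x i) xs) p := by
  unfold capacity EpTransform
  refine integral_congr_offpair _ _ 0 xs fun t ht0 htxs => ?_
  rcases lt_trichotomy t xs with hlt | heq | hgt
  · -- t < xs : the signals agree at t
    congr 1
    unfold worstCase
    refine congrArg (· - p) (Finset.sum_congr rfl fun i _ => ?_)
    by_cases h0 : 0 ≤ t
    · have : (t < x i) ↔ (t < min (x i) xs) := by
        rw [lt_min_iff]; exact ⟨fun h => ⟨h, hlt⟩, fun h => h.1⟩
      rw [if_congr (and_congr_right fun _ => this) rfl rfl]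
    · rw [if_neg (fun h => h0 h.1), if_neg (fun h => h0 h.1)]
  · exact absurd heq htxs
  · -- t > xs : both integrands are 0
    have h1 : worstCase pbar x t ≤ p := by
      refine le_trans ?_ hpc
      refine Finset.sum_le_sum fun i _ => ?_
      split_ifs with h1 h2
      · exact le_rfl
      · exact absurd (lt_trans hgt h1.2) h2
      · exact hp i
      · exact le_rfl
    have h2 : worstCase pbar (fun i => min (x i) xs) t = 0 := by
      unfold worstCase
      refine Finset.sum_eq_zero fun i _ => ?_
      rw [if_neg]
      rintro ⟨-, hlt⟩
      have : t < xs := lt_of_lt_of_le hlt (min_le_right (x i) xs)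
      linarith
    rw [h2, max_eq_right (by linarith), max_eq_right (by linarith)]

lemma capacity_trunc_affine {n : ℕ} (pbar x : Fin n → ℝ) (hp : ∀ i, 0 ≤ pbar i)
    (hx : ∀ i, 0 ≤ x i) {xs : ℝ} (hxs : 0 ≤ xs)
    {p : ℝ} (hpge : 0 ≤ p) (hpc : p ≤ ∑ i, if xs ≤ x i then pbar i else 0) :
    capacity pbar (fun i => min (x i) xs) p = (∑ i, pbar i * min (x i) xs) - p * xs := by
  unfold capacity EpTransform
  set R := worstCase pbar (fun i => min (x i) xs) with hR
  have key : ∫ t in Set.Ioi (0:ℝ), max (R t - p) 0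
      = ∫ t in Set.Ioi (0:ℝ), (Set.Ioo (0:ℝ) xs).indicator (fun t => R t - p) t := by
    refine integral_congr_offpair _ _ 0 xs fun t ht0 htxs => ?_
    rcases lt_trichotomy t xs with hlt | heq | hgt
    · rcases lt_trichotomy t 0 with h0 | h0 | h0
      · have hz : R t = 0 := by
          refine Finset.sum_eq_zero fun i _ => if_neg (fun h => absurd h.1 (not_le.2 h0))
        rw [Set.indicator_of_notMem (by simp [Set.mem_Ioo]; intro h; linarith) , hz,
          max_eq_right (by linarith)]
      · exact absurd h0 ht0
      · -- 0 < t < xs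
        have hmem : t ∈ Set.Ioo (0:ℝ) xs := ⟨h0, hlt⟩
        rw [Set.indicator_of_mem hmem]
        refine max_eq_left ?_
        have hRge : (∑ i, if xs ≤ x i then pbar i else 0) ≤ R t := by
          refine Finset.sum_le_sum fun i _ => ?_
          split_ifs with h1 h2
          · exact le_rfl
          · exact absurd ⟨le_of_lt h0, lt_min_iff.2 ⟨lt_of_lt_of_le hlt h1, hlt⟩⟩ h2
          · exact hp i
          · exact le_rfl
        linarith
    · exact absurd heq htxs
    · have hz : R t = 0 := by
        refine Finset.sum_eq_zero fun i _ => if_neg ?_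
        rintro ⟨-, hlt⟩
        have : t < xs := lt_of_lt_of_le hlt (min_le_right (x i) xs)
        linarith
      rw [Set.indicator_of_notMem (by simp [Set.mem_Ioo]; intro h; linarith), hz,
        max_eq_right (by linarith)]
  rw [key, setIntegral_indicator measurableSet_Ioo]
  have hset : Set.Ioi (0:ℝ) ∩ Set.Ioo 0 xs = Set.Ioo 0 xs := by
    rw [Set.inter_eq_right]; exact fun t ht => ht.1
  rw [hset]
  have hint : IntegrableOn R (Set.Ioo 0 xs) :=
    (worstCase_integrable pbar _).integrableOn
  have hconst : IntegrableOn (fun _ : ℝ => p) (Set.Ioo 0 xs) :=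
    integrableOn_const (by simp [Real.volume_Ioo, ENNReal.ofReal_lt_top])
  rw [integral_sub hint hconst,
    integral_worstCase_Ioo pbar _ (fun i => le_min (hx i) hxs) (fun i => min_le_right _ _),
    setIntegral_const, measureReal_def, Real.volume_Ioo, smul_eq_mul, ENNReal.toReal_ofReal (by linarith),
    sub_zero, mul_comm]

lemma chord_bound {E : ℝ → ℝ} (hconv : ConvexOn ℝ (Set.Ici 0) E)
    {a b p c m : ℝ} (ha : 0 ≤ a) (hap : a ≤ p) (hpb : p ≤ b)
    (h1 : E a ≤ c + m * a) (h2 : E b ≤ c + m * b) : E p ≤ c + m * p := by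
  rcases eq_or_lt_of_le (le_trans hap hpb) with heq | hab
  · have hpa : p = a := le_antisymm (heq ▸ hpb) hap
    rw [hpa]; exact h1
  · have hba : 0 < b - a := sub_pos.2 hab
    set lam := (b - p) / (b - a) with hlam
    set mu := (p - a) / (b - a) with hmu
    have hlam0 : 0 ≤ lam := div_nonneg (by linarith) (by linarith)
    have hmu0 : 0 ≤ mu := div_nonneg (by linarith) (by linarith)
    have hsum : lam + mu = 1 := by
      rw [hlam, hmu, ← add_div]
      rw [show b - p + (p - a) = b - a by ring]
      exact div_self (ne_of_gt hba)
    have hcomb : lam * a + mu * b = p := by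
      rw [hlam, hmu]
      field_simp
      ring
    have := hconv.2 (Set.mem_Ici.2 ha) (Set.mem_Ici.2 (by linarith : (0:ℝ) ≤ b))
      hlam0 hmu0 hsum
    simp only [smul_eq_mul] at this
    rw [hcomb] at this
    calc E p ≤ lam * E a + mu * E b := this
      _ ≤ lam * (c + m * a) + mu * (c + m * b) :=
          add_le_add (mul_le_mul_of_nonneg_left h1 hlam0) (mul_le_mul_of_nonneg_left h2 hmu0)
      _ = (lam + mu) * c + m * (lam * a + mu * b) := by ring
      _ = c + m * p := by rw [hsum, hcomb]; ring


/-- For a convex nonnegative curve `E` on `[0,∞)`: domination by the original capacity curve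
together with `E(0) ≤ E^d` is equivalent to domination by the truncated-fleet capacity curve,
where `x̃ᵢ = min{xᵢ, x*}` and `E^d = Σᵢ p̄ᵢ·min{xᵢ, x*}`. -/
theorem truncated_capacity_domination {n : ℕ} (pbar x : Fin n → ℝ)
    (hp : ∀ i, 0 < pbar i) (hx : ∀ i, 0 ≤ x i)
    (xs : ℝ) (hxs : 0 ≤ xs)
    (E : ℝ → ℝ) (hconv : ConvexOn ℝ (Set.Ici 0) E) (hnonneg : ∀ p ≥ (0:ℝ), 0 ≤ E p) :
    ((∀ p ≥ (0:ℝ), E p ≤ capacity pbar x p) ∧ E 0 ≤ ∑ i, pbar i * min (x i) xs) ↔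
      (∀ p ≥ (0:ℝ), E p ≤ capacity pbar (fun i => min (x i) xs) p) := by
  have hp0 : ∀ i, 0 ≤ pbar i := fun i => le_of_lt (hp i)
  set pc : ℝ := ∑ i, if xs < x i then pbar i else 0 with hpc_def
  set pc' : ℝ := ∑ i, if xs ≤ x i then pbar i else 0 with hpc'_def
  have hpc0 : 0 ≤ pc := Finset.sum_nonneg fun i _ => by split_ifs; exacts [hp0 i, le_rfl]
  have hpc'0 : 0 ≤ pc' := Finset.sum_nonneg fun i _ => by split_ifs; exacts [hp0 i, le_rfl]
  have hpcle : pc ≤ pc' := by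
    refine Finset.sum_le_sum fun i _ => ?_
    split_ifs with h1 h2
    · exact le_rfl
    · exact absurd (le_of_lt h1) h2
    · exact hp0 i
    · exact le_rfl
  have hEd0 : capacity pbar (fun i => min (x i) xs) 0 = ∑ i, pbar i * min (x i) xs :=
    capacity_zero pbar _ hp0 (fun i => le_min (hx i) hxs)
  constructor
  · rintro ⟨hE, hE0⟩ p hpge
    by_cases hcase : pc ≤ p
    · rw [← capacity_eq_of_ge pbar x hp0 xs hpge hcase]
      exact hE p hpge
    · push_neg at hcase
      have hple : p ≤ pc' := le_trans (le_of_lt hcase) hpcle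
      rw [capacity_trunc_affine pbar x hp0 hx hxs hpge hple]
      have hEb : E pc' ≤ (∑ i, pbar i * min (x i) xs) + (-xs) * pc' := by
        have h1 := hE pc' hpc'0
        rw [capacity_eq_of_ge pbar x hp0 xs hpc'0 hpcle,
          capacity_trunc_affine pbar x hp0 hx hxs hpc'0 le_rfl] at h1
        linarith
      have := chord_bound hconv (a := 0) (b := pc') (c := ∑ i, pbar i * min (x i) xs)
        (m := -xs) le_rfl hpge hple (by simpa using hE0) hEb
      linarith
  · intro hE
    constructor
    · intro p hpge
      exact le_trans (hE p hpge) (capacity_mono pbar x hp0 xs hpge)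
    · calc E 0 ≤ capacity pbar (fun i => min (x i) xs) 0 := hE 0 le_rfl
        _ = ∑ i, pbar i * min (x i) xs := hEd0
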